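/- Let α > 0, p > 0 and λ ≥ 0 be real numbers. Then the series Σ_{k=0}^∞ log(1 + (λ/p)·e^{-αk}) converges and satisfies (1/α)·∫₀^{λ/p} log(1+u)/u du ≤ Σ_{k=0}^∞ log(1 + (λ/p)·e^{-αk}) ≤ (1/α)·∫₀^{λ/p} log(1+u)/u du + log(1 + λ/p). -/

import Mathlib

open Real MeasureTheory intervalIntegral Filter Finset

noncomputable def Fint (t : ℝ) : ℝ := ∫ u in (0:ℝ)..t, Real.log (1 + u) / u

lemma hmeas : Measurable (fun u : ℝ => Real.log (1 + u) / u) := by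
  exact (Real.measurable_log.comp (measurable_const.add measurable_id)).div measurable_id

lemma hbound {u : ℝ} (hu : 0 < u) : Real.log (1 + u) / u ≤ 1 := by
  rw [div_le_one hu]
  have := Real.log_le_sub_one_of_pos (x := 1 + u) (by linarith)
  linarith

lemma hnn {u : ℝ} (hu : 0 ≤ u) : 0 ≤ Real.log (1 + u) / u := by
  apply div_nonneg _ hu
  exact Real.log_nonneg (by linarith)

lemma hIntegr (t : ℝ) (ht : 0 ≤ t) :
    IntervalIntegrable (fun u : ℝ => Real.log (1 + u) / u) volume 0 t := by
  rw [intervalIntegrable_iff_integrableOn_Ioc_of_le ht]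
  have h1 : IntegrableOn (fun _ : ℝ => (1:ℝ)) (Set.Ioc 0 t) := by
    exact integrableOn_const measure_Ioc_lt_top.ne
  apply h1.mono' (hmeas.aestronglyMeasurable.restrict)
  filter_upwards [ae_restrict_mem measurableSet_Ioc] with u hu
  rw [Real.norm_eq_abs, abs_of_nonneg (hnn hu.1.le)]
  exact hbound hu.1

lemma F_nonneg (t : ℝ) (ht : 0 ≤ t) : 0 ≤ Fint t := by
  apply intervalIntegral.integral_nonneg ht
  intro u hu; exact hnn hu.1

lemma F_le (t : ℝ) (ht : 0 ≤ t) : Fint t ≤ t := by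
  have : Fint t ≤ ∫ _ in (0:ℝ)..t, (1:ℝ) := by
    apply intervalIntegral.integral_mono_on ht (hIntegr t ht) intervalIntegrable_const
    intro u hu
    rcases eq_or_lt_of_le hu.1 with h | h
    · simp [← h]
    · exact hbound h
  simpa using this

lemma F_deriv (t : ℝ) (ht : 0 < t) : HasDerivAt Fint (Real.log (1 + t) / t) t := by
  apply intervalIntegral.integral_hasDerivAt_right (hIntegr t ht.le)
    (hmeas.stronglyMeasurable.stronglyMeasurableAtFilter)
  apply ContinuousAt.div _ continuousAt_id ht.ne'
  exact (Real.continuousAt_log (by linarith)).comp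
    ((continuous_const.add continuous_id).continuousAt)

theorem stmt_4 (α p lam : ℝ) (hα : 0 < α) (hp : 0 < p) (hlam : 0 ≤ lam) :
    Summable (fun k : ℕ => Real.log (1 + lam / p * Real.exp (-α * k))) ∧
    (1 / α) * (∫ u in (0:ℝ)..(lam / p), Real.log (1 + u) / u)
      ≤ ∑' k : ℕ, Real.log (1 + lam / p * Real.exp (-α * k)) ∧
    ∑' k : ℕ, Real.log (1 + lam / p * Real.exp (-α * k))
      ≤ (1 / α) * (∫ u in (0:ℝ)..(lam / p), Real.log (1 + u) / u) + Real.log (1 + lam / p) := by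
  set c : ℝ := lam / p with hcdef
  have hc : 0 ≤ c := div_nonneg hlam hp.le
  set g : ℝ → ℝ := fun x => Real.log (1 + c * Real.exp (-α * x)) with hgdef
  have hgpos : ∀ x, 0 ≤ g x := by
    intro x
    apply Real.log_nonneg
    nlinarith [Real.exp_pos (-α * x), mul_nonneg hc (Real.exp_pos (-α * x)).le]
  have hexp : ∀ k : ℕ, Real.exp (-α * k) = Real.exp (-α) ^ k := by
    intro k
    rw [← Real.exp_nat_mul]; ring_nf
  -- summability
  have hsum : Summable (fun k : ℕ => Real.log (1 + c * Real.exp (-α * k))) := by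
    apply Summable.of_nonneg_of_le (fun k => hgpos k)
      (f := fun k : ℕ => c * Real.exp (-α) ^ k)
    · intro k
      have h1 : 0 ≤ c * Real.exp (-α * k) := mul_nonneg hc (Real.exp_pos _).le
      have := Real.log_le_sub_one_of_pos (x := 1 + c * Real.exp (-α * k)) (by linarith)
      simp only [hgdef]
      rw [hexp k] at this
      rw [hexp k]
      linarith
    · exact (summable_geometric_of_lt_one (Real.exp_pos _).le
        (Real.exp_lt_one_iff.2 (by linarith))).mul_left c
  refine ⟨hsum, ?_⟩
  rcases eq_or_lt_of_le hc with hc0 | hc0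
  · simp [← hc0, Fint, intervalIntegral.integral_same]
  -- now c > 0
  set G : ℝ → ℝ := fun x => -(1/α) * Fint (c * Real.exp (-α * x)) with hGdef
  have hG : ∀ x, HasDerivAt G (g x) x := by
    intro x
    have h0 : HasDerivAt (fun y : ℝ => -α * y) (-α) x := by
      simpa using (hasDerivAt_id x).const_mul (-α)
    have hin : HasDerivAt (fun x : ℝ => c * Real.exp (-α * x))
        (c * (Real.exp (-α * x) * (-α))) x := by
      exact (h0.exp.const_mul c).congr_deriv (by ring)
    have hw : 0 < c * Real.exp (-α * x) := mul_pos hc0 (Real.exp_pos _)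
    have hout := F_deriv _ hw
    have := (hout.comp x hin).const_mul (-(1/α))
    refine this.congr_deriv ?_
    symm
    rw [show -(1/α) * (Real.log (1 + c * Real.exp (-α * x)) / (c * Real.exp (-α * x)) *
          (c * (Real.exp (-α * x) * -α)))
        = Real.log (1 + c * Real.exp (-α * x)) / (c * Real.exp (-α * x)) *
          (c * Real.exp (-α * x)) * ((1/α) * α) from by ring,
      div_mul_cancel₀ _ hw.ne', one_div, inv_mul_cancel₀ hα.ne', mul_one]
  have hgc : Continuous g := by
    rw [continuous_iff_continuousAt]
    intro x
    apply Real.continuousAt_log (by nlinarith [Real.exp_pos (-α * x), mul_nonneg hc (Real.exp_pos (-α * x)).le]) |>.comp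
    exact (continuous_const.add (continuous_const.mul (Real.continuous_exp.comp (continuous_const.mul continuous_id)))).continuousAt
  have hint : ∀ n : ℕ, ∫ x in (0:ℝ)..(n:ℝ), g x
      = (1/α) * Fint c - (1/α) * Fint (c * Real.exp (-α * n)) := by
    intro n
    rw [intervalIntegral.integral_eq_sub_of_hasDerivAt (fun x _ => hG x)
      (hgc.intervalIntegrable _ _)]
    simp [hGdef]
    ring
  have hanti : ∀ n : ℕ, AntitoneOn g (Set.Icc (0:ℝ) (0 + n)) := by
    intro n x _ y _ hxy
    apply Real.log_le_log (by nlinarith [Real.exp_pos (-α * y), mul_nonneg hc (Real.exp_pos (-α * y)).le])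
    have : Real.exp (-α * y) ≤ Real.exp (-α * x) := by
      apply Real.exp_le_exp.2
      nlinarith
    nlinarith
  have htend0 : Tendsto (fun n : ℕ => Real.exp (-α * n)) atTop (nhds 0) := by
    simp only [hexp]
    exact tendsto_pow_atTop_nhds_zero_of_lt_one (Real.exp_pos _).le
      (Real.exp_lt_one_iff.2 (by linarith))
  constructor
  · -- lower bound
    have key : ∀ n : ℕ, (1/α) * Fint c
        ≤ (∑' k : ℕ, Real.log (1 + c * Real.exp (-α * k))) + (1/α) * (c * Real.exp (-α * n)) := by
      intro n
      have h1 : ∫ x in (0:ℝ)..(0 + n), g x ≤ ∑ i ∈ Finset.range n, g (0 + i) :=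
        (hanti n).integral_le_sum
      simp only [zero_add] at h1
      have h2 : ∑ i ∈ Finset.range n, g (i : ℕ) ≤ ∑' k : ℕ, Real.log (1 + c * Real.exp (-α * k)) := by
        exact Summable.sum_le_tsum (Finset.range n) (fun k _ => hgpos k) hsum
      have h3 := hint n
      have h4 : Fint (c * Real.exp (-α * n)) ≤ c * Real.exp (-α * n) :=
        F_le _ (mul_nonneg hc (Real.exp_pos _).le)
      have h5 : (0:ℝ) < 1/α := by positivity
      nlinarith [mul_le_mul_of_nonneg_left h4 h5.le]
    have htl : Tendsto (fun n : ℕ => (∑' k : ℕ, Real.log (1 + c * Real.exp (-α * k)))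
        + (1/α) * (c * Real.exp (-α * n))) atTop
        (nhds ((∑' k : ℕ, Real.log (1 + c * Real.exp (-α * k))) + (1/α) * (c * 0))) := by
      exact tendsto_const_nhds.add ((tendsto_const_nhds.mul htend0).const_mul _)
    have := ge_of_tendsto' htl key
    simpa [Fint] using this
  · -- upper bound
    apply Summable.tsum_le_of_sum_range_le hsum
    intro n
    match n with
    | 0 =>
      simp only [Finset.range_zero, Finset.sum_empty]
      have h2 : 0 ≤ Real.log (1 + c) := Real.log_nonneg (by linarith)
      have h3 : 0 ≤ Fint c := F_nonneg c hc
      have : (0:ℝ) ≤ (1/α) * Fint c := by positivity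
      simp only [Fint] at this
      linarith [this, h2]
    | (m+1) =>
      have h1 : ∑ i ∈ Finset.range m, g (0 + ((i:ℕ) + 1 : ℕ)) ≤ ∫ x in (0:ℝ)..(0 + m), g x :=
        (hanti m).sum_le_integral
      simp only [zero_add] at h1
      have h2 := hint m
      have h3 : 0 ≤ Fint (c * Real.exp (-α * m)) := F_nonneg _ (mul_nonneg hc (Real.exp_pos _).le)
      have h4 : (0:ℝ) < 1/α := by positivity
      have h5 : ∑ i ∈ Finset.range (m+1), Real.log (1 + c * Real.exp (-α * i))
          = Real.log (1 + c * Real.exp (-α * (0:ℕ))) + ∑ i ∈ Finset.range m, g ((i:ℕ) + 1 : ℕ) := by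
        rw [Finset.sum_range_succ']
        simp only [hgdef]
        push_cast
        ring
      rw [h5]
      have h6 : Real.log (1 + c * Real.exp (-α * (0:ℕ))) = Real.log (1 + c) := by
        norm_num
      have h7 : ∑ i ∈ Finset.range m, g ((i:ℕ) + 1 : ℕ) ≤ (1/α) * Fint c := by
        calc ∑ i ∈ Finset.range m, g ((i:ℕ) + 1 : ℕ) ≤ ∫ x in (0:ℝ)..(m:ℝ), g x := by
              simpa using h1
          _ = (1/α) * Fint c - (1/α) * Fint (c * Real.exp (-α * m)) := h2
          _ ≤ (1/α) * Fint c := by nlinarith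
      have : (1/α) * Fint c = (1 / α) * (∫ u in (0:ℝ)..c, Real.log (1 + u) / u) := rfl
      rw [h6]
      linarith [h7]
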